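/- Let S be the monoid presented by generators x_0, x_1, x_2, … subject to the relations x_0 x_k = x_0 and x_k x_0 = x_0 for all k ≥ 1, x_k^k = x_k^{k+1} for all k ≥ 1, and x_i x_j = x_j^2 for all i, j ≥ 1, and for each i ≥ 1 let σ_i = {(s,t) ∈ S×S : ∃ p, q ∈ R_i with ps = qt} where R_i = {x_i^n : n ≥ 0}. Then each σ_i (i ≥ 1) is a right congruence on S, and for all i, j ≥ 1 the quotient right S-acts S/σ_i and S/σ_j are isomorphic. -/

import Mathlib

/-- The defining relations of the Qiao–Wei monoid: `x₀xₖ = xₖx₀ = x₀` for `k ≥ 1`,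
`xₖ^k = xₖ^(k+1)` for `k ≥ 1`, and `xᵢxⱼ = xⱼ²` for `i, j ≥ 1`, as a relation on the
free monoid on `ℕ`. -/
inductive QWRel : FreeMonoid ℕ → FreeMonoid ℕ → Prop
  | zero_mul (k : ℕ) : 1 ≤ k →
      QWRel (FreeMonoid.of 0 * FreeMonoid.of k) (FreeMonoid.of 0)
  | mul_zero (k : ℕ) : 1 ≤ k →
      QWRel (FreeMonoid.of k * FreeMonoid.of 0) (FreeMonoid.of 0)
  | pow (k : ℕ) : 1 ≤ k →
      QWRel (FreeMonoid.of k ^ k) (FreeMonoid.of k ^ (k + 1))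
  | mul (i j : ℕ) : 1 ≤ i → 1 ≤ j →
      QWRel (FreeMonoid.of i * FreeMonoid.of j) (FreeMonoid.of j ^ 2)

/-- The Qiao–Wei monoid `S = ⟨x₀,x₁,… ∣ x₀xₖ = xₖx₀ = x₀, xₖ^k = xₖ^(k+1) (k ≥ 1),
xᵢxⱼ = xⱼ² (i,j ≥ 1)⟩`: the quotient of the free monoid on `ℕ` by the congruence
generated by the relations. -/
abbrev QWMonoid : Type := (conGen QWRel).Quotient

/-- The generator `xᵢ` of the Qiao–Wei monoid. -/
def x (i : ℕ) : QWMonoid := Con.mk' (conGen QWRel) (FreeMonoid.of i)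

/-- The relation `σᵢ` on `S`: `(s,t) ∈ σᵢ` iff `ps = qt` for some `p, q` in
`Rᵢ = {xᵢⁿ : n ≥ 0}`. -/
def σ (i : ℕ) : QWMonoid → QWMonoid → Prop := fun s t =>
  ∃ p q : QWMonoid, (∃ m : ℕ, p = x i ^ m) ∧ (∃ n : ℕ, q = x i ^ n) ∧ p * s = q * t

lemma qw_rel {a b : FreeMonoid ℕ} (h : QWRel a b) :
    Con.mk' (conGen QWRel) a = Con.mk' (conGen QWRel) b :=
  (Con.eq _).mpr (ConGen.Rel.of _ _ h)

/-- `xᵢ xⱼ = xⱼ²` for `i, j ≥ 1`. -/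
lemma x_mul_x {i j : ℕ} (hi : 1 ≤ i) (hj : 1 ≤ j) : x i * x j = x j ^ 2 := by
  have := qw_rel (QWRel.mul i j hi hj)
  simpa [x, map_mul, map_pow] using this

/-- `x₁² = x₁`. -/
lemma x_one_sq : x 1 ^ 2 = x 1 := by
  have := qw_rel (QWRel.pow 1 le_rfl)
  simp only [x, map_pow] at this
  simpa [x] using this.symm

/-- `xₖ³ = xₖ²` for `k ≥ 1`. -/
lemma x_cube {k : ℕ} (hk : 1 ≤ k) : x k ^ 3 = x k ^ 2 :=
  calc x k ^ 3 = x k * x k ^ 2 := pow_succ' (x k) 2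
    _ = x k * (x 1 * x k) := by rw [x_mul_x le_rfl hk]
    _ = (x k * x 1) * x k := (mul_assoc _ _ _).symm
    _ = x 1 ^ 2 * x k := by rw [x_mul_x hk le_rfl]
    _ = x 1 * x k := by rw [x_one_sq]
    _ = x k ^ 2 := x_mul_x le_rfl hk

/-- `xₖ^(m+2) = xₖ²` for `k ≥ 1`. -/
lemma x_pow_stable {k : ℕ} (hk : 1 ≤ k) (m : ℕ) : x k ^ (m + 2) = x k ^ 2 := by
  induction m with
  | zero => rfl
  | succ n ih =>
      calc x k ^ (n + 3) = x k ^ (n + 2) * x k := pow_succ _ _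
        _ = x k ^ 2 * x k := by rw [ih]
        _ = x k ^ 3 := (pow_succ _ _).symm
        _ = x k ^ 2 := x_cube hk

lemma σ_refl (i : ℕ) (s : QWMonoid) : σ i s s :=
  ⟨x i ^ 0, x i ^ 0, ⟨0, rfl⟩, ⟨0, rfl⟩, rfl⟩

lemma σ_symm {i : ℕ} {s t : QWMonoid} : σ i s t → σ i t s :=
  fun ⟨p, q, hp, hq, h⟩ => ⟨q, p, hq, hp, h.symm⟩

lemma σ_trans {i : ℕ} {s t u : QWMonoid} : σ i s t → σ i t u → σ i s u := by
  rintro ⟨_, _, ⟨a, rfl⟩, ⟨b, rfl⟩, h1⟩ ⟨_, _, ⟨c, rfl⟩, ⟨d, rfl⟩, h2⟩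
  refine ⟨x i ^ (c + a), x i ^ (b + d), ⟨_, rfl⟩, ⟨_, rfl⟩, ?_⟩
  calc x i ^ (c + a) * s = x i ^ c * (x i ^ a * s) := by rw [← mul_assoc, ← pow_add]
    _ = x i ^ c * (x i ^ b * t) := by rw [h1]
    _ = x i ^ b * (x i ^ c * t) := by
        rw [← mul_assoc, ← pow_add, Nat.add_comm, pow_add, mul_assoc]
    _ = x i ^ b * (x i ^ d * u) := by rw [h2]
    _ = x i ^ (b + d) * u := by rw [← mul_assoc, ← pow_add]

lemma σ_right_compat {i : ℕ} {s t : QWMonoid} (u : QWMonoid) :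
    σ i s t → σ i (s * u) (t * u) := by
  rintro ⟨p, q, hp, hq, h⟩
  exact ⟨p, q, hp, hq, by rw [← mul_assoc, h, mul_assoc]⟩

/-- Key lemma: left multiplication by a suitable power of `xⱼ` realizes
`xᵢ^(m+1) * s` starting from `xᵢ * s`. -/
lemma realize {i j : ℕ} (hi : 1 ≤ i) (hj : 1 ≤ j) (m : ℕ) (s : QWMonoid) :
    ∃ a : ℕ, x j ^ a * (x i * s) = x i ^ (m + 1) * s := by
  cases m with
  | zero => exact ⟨0, by rw [pow_zero, one_mul, pow_one]⟩
  | succ n =>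
      refine ⟨1, ?_⟩
      rw [pow_one, ← mul_assoc, x_mul_x hj hi, x_pow_stable hi n]

/-- Well-definedness of the map `[s]ᵢ ↦ [xᵢ s]ⱼ`. -/
lemma wd {i j : ℕ} (hi : 1 ≤ i) (hj : 1 ≤ j) {s t : QWMonoid} (h : σ i s t) :
    σ j (x i * s) (x i * t) := by
  obtain ⟨_, _, ⟨m, rfl⟩, ⟨n, rfl⟩, h⟩ := h
  have h' : x i ^ (m + 1) * s = x i ^ (n + 1) * t := by
    rw [pow_succ', mul_assoc, h, ← mul_assoc, ← pow_succ']
  obtain ⟨a, ha⟩ := realize hi hj m s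
  obtain ⟨b, hb⟩ := realize hi hj n t
  exact ⟨x j ^ a, x j ^ b, ⟨a, rfl⟩, ⟨b, rfl⟩, by rw [ha, hb, h']⟩

/-- `[xⱼ (xᵢ s)]ᵢ = [s]ᵢ`. -/
lemma cancel {i j : ℕ} (hi : 1 ≤ i) (hj : 1 ≤ j) (s : QWMonoid) :
    σ i (x j * (x i * s)) s := by
  refine ⟨x i ^ 0, x i ^ 2, ⟨0, rfl⟩, ⟨2, rfl⟩, ?_⟩
  rw [pow_zero, one_mul, ← mul_assoc, x_mul_x hj hi]

/-- For `i ≥ 1`, each `σᵢ` is a right congruence on `S` (an equivalence relation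
compatible with right multiplication), and for all `i, j ≥ 1` the quotient right
`S`-acts `S/σᵢ` and `S/σⱼ` (with action `[s]·u = [su]`) are isomorphic: there is a
bijection `f : S/σᵢ → S/σⱼ` commuting with the actions. -/
theorem qw_quotients_isomorphic :
    (∀ i : ℕ, 1 ≤ i →
      Equivalence (σ i) ∧ ∀ s t u : QWMonoid, σ i s t → σ i (s * u) (t * u)) ∧
    ∀ i j : ℕ, 1 ≤ i → 1 ≤ j →
      ∃ (acti : Quot (σ i) → QWMonoid → Quot (σ i))
        (actj : Quot (σ j) → QWMonoid → Quot (σ j)),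
        (∀ s u : QWMonoid, acti (Quot.mk (σ i) s) u = Quot.mk (σ i) (s * u)) ∧
        (∀ s u : QWMonoid, actj (Quot.mk (σ j) s) u = Quot.mk (σ j) (s * u)) ∧
        ∃ f : Quot (σ i) → Quot (σ j), Function.Bijective f ∧
          ∀ (q : Quot (σ i)) (u : QWMonoid), f (acti q u) = actj (f q) u := by
  constructor
  · intro i _
    exact ⟨⟨σ_refl i, σ_symm, σ_trans⟩, fun s t u h => σ_right_compat u h⟩
  · intro i j hi hj
    refine ⟨fun q u => Quot.lift (fun s => Quot.mk (σ i) (s * u))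
        (fun s t h => Quot.sound (σ_right_compat u h)) q,
      fun q u => Quot.lift (fun s => Quot.mk (σ j) (s * u))
        (fun s t h => Quot.sound (σ_right_compat u h)) q,
      fun s u => rfl, fun s u => rfl,
      Quot.lift (fun s => Quot.mk (σ j) (x i * s)) (fun s t h => Quot.sound (wd hi hj h)),
      ?_, ?_⟩
    · rw [Function.bijective_iff_has_inverse]
      refine ⟨Quot.lift (fun t => Quot.mk (σ i) (x j * t))
          (fun s t h => Quot.sound (wd hj hi h)), ?_, ?_⟩
      · intro q
        induction q using Quot.ind with
        | _ s => exact Quot.sound (cancel hi hj s)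
      · intro q
        induction q using Quot.ind with
        | _ t => exact Quot.sound (cancel hj hi t)
    · intro q u
      induction q using Quot.ind with
      | _ s => exact congrArg (Quot.mk (σ j)) (mul_assoc (x i) s u).symm
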